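/- Assume K has characteristic 0. Then every semilinear representation V of H over K that is finite-dimensional as a K-vector space is a direct sum of simple subrepresentations: there exist subrepresentations W₁,…,W_r of V, each simple as a semilinear representation of H over K, such that V = W₁ ⊕ ⋯ ⊕ W_r. -/

import Mathlib

/-- A semilinear representation of `H` over `K`: a `K`-vector space `V` with an
action of `H` by additive automorphisms such that `h • (c • v) = (h • c) • (h • v)`. -/
structure SemilinearRep (K H : Type) [Field K] [Group H] [MulSemiringAction H K] where
  carrier : Type
  [isAddCommGroup : AddCommGroup carrier]
  [isModule : Module K carrier]
  [isDistribMulAction : DistribMulAction H carrier]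
  semilinear : ∀ (h : H) (c : K) (v : carrier), h • (c • v) = (h • c) • (h • v)

attribute [instance] SemilinearRep.isAddCommGroup SemilinearRep.isModule
  SemilinearRep.isDistribMulAction

variable {K H : Type} [Field K] [Group H] [MulSemiringAction H K]

/-- An `H`-invariant `K`-subspace (a subrepresentation). -/
def SemilinearRep.IsSubrep (V : SemilinearRep K H) (W : Submodule K V.carrier) : Prop :=
  ∀ (h : H), ∀ w ∈ W, h • w ∈ W

/-- A semilinear representation is simple if it is nonzero and its only
subrepresentations are `⊥` and `⊤`. -/
def SemilinearRep.IsSimple (V : SemilinearRep K H) : Prop :=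
  Nontrivial V.carrier ∧
    ∀ W : Submodule K V.carrier, V.IsSubrep W → W = ⊥ ∨ W = ⊤

/-- Two semilinear representations are isomorphic if there is a bijective
`K`-linear `H`-equivariant map between them. -/
def SemilinearRep.Iso (V W : SemilinearRep K H) : Prop :=
  ∃ e : V.carrier ≃ₗ[K] W.carrier, ∀ (h : H) (v : V.carrier), e (h • v) = h • e v

/-- The kernel `H′` of the action of `H` on `K`. -/
def kerAct (K H : Type) [Field K] [Group H] [MulSemiringAction H K] : Subgroup H where
  carrier := {h : H | ∀ c : K, h • c = c}
  one_mem' := fun c => one_smul H c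
  mul_mem' := by
    intro a b ha hb c
    simp only [Set.mem_setOf_eq] at *
    rw [mul_smul, hb, ha]
  inv_mem' := by
    intro a ha c
    simp only [Set.mem_setOf_eq] at *
    conv_lhs => rw [← ha c]
    rw [inv_smul_smul]

section Aux

private lemma iSup_fin_cons {α : Type*} [CompleteLattice α] {n : ℕ} (a : α) (f : Fin n → α) :
    (⨆ i, Fin.cons a f i) = a ⊔ ⨆ i, f i := by
  apply le_antisymm
  · refine iSup_le fun i => ?_
    refine Fin.cases ?_ (fun k => ?_) i
    · exact le_sup_left
    · exact le_trans (le_iSup f k) le_sup_right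
  · refine sup_le ?_ (iSup_le fun k => ?_)
    · simpa using le_iSup (Fin.cons a f) 0
    · simpa using le_iSup (Fin.cons a f) k.succ

private lemma iSupIndep_fin_cons {α : Type*} [CompleteLattice α] [IsModularLattice α] {n : ℕ}
    {a : α} {f : Fin n → α} (hf : iSupIndep f) (ha : Disjoint a (⨆ i, f i)) :
    iSupIndep (Fin.cons a f : Fin (n + 1) → α) := by
  rw [iSupIndep_def]
  intro i
  refine Fin.cases ?_ (fun k => ?_) i
  · refine ha.mono_right (iSup_le fun j => iSup_le fun hj => ?_)
    rcases Fin.eq_zero_or_eq_succ j with rfl | ⟨m, rfl⟩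
    · exact absurd rfl hj
    · simpa using le_iSup f m
  · have h1 : Disjoint (f k) (⨆ (m) (_ : m ≠ k), f m) := (iSupIndep_def.mp hf) k
    have h2 : Disjoint (f k ⊔ ⨆ (m) (_ : m ≠ k), f m) a := by
      refine (ha.symm).mono_left (sup_le (le_iSup f k) ?_)
      exact iSup_le fun m => iSup_le fun _ => le_iSup f m
    have h3 : Disjoint (f k) ((⨆ (m) (_ : m ≠ k), f m) ⊔ a) :=
      h1.disjoint_sup_right_of_disjoint_sup_left h2
    refine h3.mono_right (iSup_le fun j => iSup_le fun hj => ?_)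
    rcases Fin.eq_zero_or_eq_succ j with rfl | ⟨m, rfl⟩
    · exact le_sup_right
    · have hm : m ≠ k := fun h => hj (by rw [h])
      exact le_trans (le_iSup₂ (f := fun m (_ : m ≠ k) => f m) m hm) le_sup_left

private lemma smul_ratCast_eq (h : H) (q : ℚ) : h • (q : K) = (q : K) := by
  exact map_ratCast (MulSemiringAction.toRingHom H K h) q

/-- Maschke-type lemma: every subrepresentation has an invariant complement. -/
private lemma exists_subrep_isCompl [CharZero K] [Finite H] (V : SemilinearRep K H)
    (W : Submodule K V.carrier) (hW : V.IsSubrep W) :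
    ∃ C : Submodule K V.carrier, V.IsSubrep C ∧ IsCompl W C := by
  classical
  cases nonempty_fintype H
  obtain ⟨C0, hC0⟩ := W.exists_isCompl
  set π : V.carrier →ₗ[K] V.carrier := W.subtype ∘ₗ W.projectionOnto C0 hC0 with hπ
  have hπ_mem : ∀ v, π v ∈ W := fun v => (W.projectionOnto C0 hC0 v).2
  have hπ_id : ∀ w ∈ W, π w = w := fun w hw => by
    have := Submodule.projectionOnto_apply_left hC0 ⟨w, hw⟩
    simpa [hπ] using congrArg Subtype.val this
  have hN : (Nat.card H : ℚ) ≠ 0 := by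
    exact_mod_cast Nat.card_pos.ne'
  set c : K := (((Nat.card H : ℚ)⁻¹ : ℚ) : K) with hc
  set f : V.carrier → V.carrier := fun v => ∑ h : H, h • π (h⁻¹ • v) with hf
  have f_add : ∀ x y, f (x + y) = f x + f y := by
    intro x y
    simp only [hf, smul_add, map_add, ← Finset.sum_add_distrib]
  have f_smul : ∀ (a : K) (x : V.carrier), f (a • x) = a • f x := by
    intro a x
    rw [hf, Finset.smul_sum]
    refine Finset.sum_congr rfl fun h _ => ?_
    rw [V.semilinear h⁻¹ a x, map_smul, V.semilinear h, smul_inv_smul]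
  have f_equiv : ∀ (g : H) (v : V.carrier), f (g • v) = g • f v := by
    intro g v
    rw [hf]
    simp only []
    rw [show (∑ h : H, h • π (h⁻¹ • g • v)) = ∑ h : H, (g * h) • π ((g * h)⁻¹ • g • v) from
      (Fintype.sum_equiv (Equiv.mulLeft g) _ _ fun h => rfl).symm, Finset.smul_sum]
    refine Finset.sum_congr rfl fun h _ => ?_
    rw [mul_inv_rev, mul_smul h⁻¹ g⁻¹, inv_smul_smul, mul_smul]
  have f_mem : ∀ v, f v ∈ W := fun v =>
    Submodule.sum_mem W fun h _ => hW h _ (hπ_mem _)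
  have f_id : ∀ w ∈ W, f w = (Nat.card H : K) • w := by
    intro w hw
    have : ∀ h : H, h • π (h⁻¹ • w) = w := fun h => by
      rw [hπ_id _ (hW h⁻¹ w hw), smul_inv_smul]
    rw [hf]
    simp only [this, Finset.sum_const, Finset.card_univ, Nat.card_eq_fintype_card]
    rw [← Nat.cast_smul_eq_nsmul K]
  set p : V.carrier →ₗ[K] V.carrier :=
    { toFun := fun v => c • f v
      map_add' := fun x y => by simp only [f_add, smul_add]
      map_smul' := fun a x => by simp only [f_smul, RingHom.id_apply, smul_comm a c] } with hp
  have p_apply : ∀ v, p v = c • f v := fun v => rfl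
  have p_mem : ∀ v, p v ∈ W := fun v => Submodule.smul_mem W c (f_mem v)
  have p_id : ∀ w ∈ W, p w = w := by
    intro w hw
    rw [p_apply, f_id w hw, smul_smul, hc]
    rw [show (((Nat.card H : ℚ)⁻¹ : ℚ) : K) * (Nat.card H : K) = 1 by
      rw [show (Nat.card H : K) = (((Nat.card H : ℚ)) : K) by push_cast; ring,
        ← Rat.cast_mul, inv_mul_cancel₀ hN, Rat.cast_one], one_smul]
  have p_equiv : ∀ (g : H) (v : V.carrier), p (g • v) = g • p v := by
    intro g v
    rw [p_apply, p_apply, f_equiv, V.semilinear g c (f v), hc, smul_ratCast_eq]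
  refine ⟨LinearMap.ker p, ?_, ?_⟩
  · intro h w hw
    rw [LinearMap.mem_ker] at hw ⊢
    rw [p_equiv, hw, smul_zero]
  · constructor
    · rw [disjoint_iff_inf_le]
      rintro x ⟨hxW, hxK⟩
      rw [SetLike.mem_coe, LinearMap.mem_ker] at hxK
      rw [Submodule.mem_bot, ← p_id x hxW, hxK]
    · rw [codisjoint_iff_le_sup]
      intro v _
      have hv : v = p v + (v - p v) := by abel
      rw [hv]
      refine Submodule.add_mem_sup (p_mem v) ?_
      rw [LinearMap.mem_ker, map_sub, p_id _ (p_mem v), sub_self]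

/-- The key induction: every subrepresentation is an internal direct sum of
minimal nonzero subrepresentations. -/
private lemma decomp_aux [CharZero K] [Finite H] (V : SemilinearRep K H)
    (hfd : FiniteDimensional K V.carrier) :
    ∀ n : ℕ, ∀ X : Submodule K V.carrier, V.IsSubrep X → Module.finrank K X ≤ n →
    ∃ (r : ℕ) (W : Fin r → Submodule K V.carrier),
      (∀ i, V.IsSubrep (W i)) ∧
      (∀ i, W i ≠ ⊥ ∧
        ∀ U : Submodule K V.carrier, U ≤ W i → V.IsSubrep U → U = ⊥ ∨ U = W i) ∧
      iSupIndep W ∧ (⨆ i, W i) = X := by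
  have bot_case : ∀ X : Submodule K V.carrier, X = ⊥ →
      ∃ (r : ℕ) (W : Fin r → Submodule K V.carrier),
      (∀ i, V.IsSubrep (W i)) ∧
      (∀ i, W i ≠ ⊥ ∧
        ∀ U : Submodule K V.carrier, U ≤ W i → V.IsSubrep U → U = ⊥ ∨ U = W i) ∧
      iSupIndep W ∧ (⨆ i, W i) = X := by
    intro X hX
    refine ⟨0, Fin.elim0, fun i => i.elim0, fun i => i.elim0, ?_, ?_⟩
    · rw [iSupIndep_def]; exact fun i => i.elim0
    · rw [hX, iSup_of_empty]
  intro n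
  induction n with
  | zero =>
    intro X hX hr
    refine bot_case X ?_
    have : Module.finrank K X = 0 := Nat.le_zero.mp hr
    exact Submodule.finrank_eq_zero.mp this
  | succ n ih =>
    intro X hX hr
    by_cases hXbot : X = ⊥
    · exact bot_case X hXbot
    · -- find a minimal nonzero subrepresentation inside X
      set s : Set ℕ :=
        {m | ∃ S : Submodule K V.carrier,
          S ≤ X ∧ V.IsSubrep S ∧ S ≠ ⊥ ∧ Module.finrank K S = m} with hs_def
      have hs : s.Nonempty := ⟨Module.finrank K X, X, le_rfl, hX, hXbot, rfl⟩
      obtain ⟨S, hSX, hSsub, hSne, hSrank⟩ := Nat.sInf_mem hs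
      have hSsimple : ∀ U : Submodule K V.carrier, U ≤ S → V.IsSubrep U →
          U = ⊥ ∨ U = S := by
        intro U hU hUsub
        by_cases hUbot : U = ⊥
        · exact Or.inl hUbot
        · refine Or.inr ?_
          have h1 : sInf s ≤ Module.finrank K U :=
            Nat.sInf_le ⟨U, hU.trans hSX, hUsub, hUbot, rfl⟩
          have h2 : Module.finrank K U ≤ Module.finrank K S := Submodule.finrank_mono hU
          exact Submodule.eq_of_le_of_finrank_eq hU (le_antisymm h2 (hSrank ▸ h1))
      obtain ⟨C, hCsub, hCcompl⟩ := exists_subrep_isCompl V S hSsub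
      set X' : Submodule K V.carrier := C ⊓ X with hX'
      have hX'sub : V.IsSubrep X' := fun h w hw => ⟨hCsub h w hw.1, hX h w hw.2⟩
      have hsup : S ⊔ X' = X := by
        rw [hX', ← sup_inf_assoc_of_le C hSX, hCcompl.sup_eq_top, top_inf_eq]
      have hdisj : Disjoint S X' := hCcompl.disjoint.mono_right inf_le_left
      have hrank : Module.finrank K S + Module.finrank K X' = Module.finrank K X := by
        have := Submodule.finrank_sup_add_finrank_inf_eq S X'
        rw [hsup, hdisj.eq_bot, finrank_bot, add_zero] at this
        omega
      have hSpos : 0 < Module.finrank K S := by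
        rcases Nat.eq_zero_or_pos (Module.finrank K S) with h0 | h
        · exact absurd (Submodule.finrank_eq_zero.mp h0) hSne
        · exact h
      have hX'rank : Module.finrank K X' ≤ n := by omega
      obtain ⟨r, W', hW'sub, hW'simple, hW'indep, hW'sup⟩ := ih X' hX'sub hX'rank
      refine ⟨r + 1, Fin.cons S W', ?_, ?_, ?_, ?_⟩
      · intro i
        refine Fin.cases ?_ (fun k => ?_) i
        · exact hSsub
        · exact hW'sub k
      · intro i
        refine Fin.cases ?_ (fun k => ?_) i
        · exact ⟨hSne, hSsimple⟩
        · exact hW'simple k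
      · exact iSupIndep_fin_cons hW'indep (by rw [hW'sup]; exact hdisj)
      · rw [iSup_fin_cons, hW'sup, hsup]

end Aux

/-- in characteristic 0, every finite-dimensional semilinear
representation is an (internal) direct sum of simple subrepresentations. -/
theorem semilinear_rep_is_semisimple [CharZero K] [Finite H]
    (V : SemilinearRep K H) (hfd : FiniteDimensional K V.carrier) :
    ∃ (r : ℕ) (W : Fin r → Submodule K V.carrier),
      (∀ i, V.IsSubrep (W i)) ∧
      (∀ i, W i ≠ ⊥ ∧
        ∀ U : Submodule K V.carrier, U ≤ W i → V.IsSubrep U → U = ⊥ ∨ U = W i) ∧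
      DirectSum.IsInternal W := by
  obtain ⟨r, W, hsub, hsimple, hindep, hsup⟩ :=
    decomp_aux V hfd (Module.finrank K (⊤ : Submodule K V.carrier)) ⊤
      (fun _ _ _ => Submodule.mem_top) le_rfl
  exact ⟨r, W, hsub, hsimple,
    (DirectSum.isInternal_submodule_iff_iSupIndep_and_iSup_eq_top W).mpr ⟨hindep, hsup⟩⟩
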